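/- Let n ≥ p ≥ 1, α = √2/2, β = 1 − √2/2, and let φ : ℝ^{n×p} → ℝ be twice continuously differentiable. Let X ∈ ℝ^{n×p} satisfy XᵀX = I_p and set P_{uv}(X) = E_{uv} − α X E_{uv}ᵀ X − β X Xᵀ E_{uv}. Then ∑_{u=1}^{n} ∑_{v=1}^{p} D²φ(X)[P_{uv}(X), P_{uv}(X)] = ∑_{i=1}^{n} ∑_{j=1}^{p} ∂²_{ij}φ(X) − ∑_{i,u=1}^{n} ∑_{j,v=1}^{p} X_{iv} X_{uj} ∂_{ij}∂_{uv}φ(X), where D²φ(X)[·,·] is the second Fréchet derivative of φ at X and ∂_{ij} denotes the partial derivative with respect to the (i,j) matrix entry. -/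

import Mathlib

open Matrix

attribute [local instance] Matrix.normedAddCommGroup Matrix.normedSpace

/-- The projected field `P_{uv}(X) = E_{uv} - α X E_{uv}ᵀ X - β X Xᵀ E_{uv}` with
`α = √2/2`, `β = 1 - √2/2`. -/
noncomputable def projField {n p : ℕ} (X : Matrix (Fin n) (Fin p) ℝ)
    (u : Fin n) (v : Fin p) : Matrix (Fin n) (Fin p) ℝ :=
  Matrix.single u v (1 : ℝ)
    - (Real.sqrt 2 / 2) • (X * (Matrix.single u v (1 : ℝ))ᵀ * X)
    - (1 - Real.sqrt 2 / 2) • (X * Xᵀ * Matrix.single u v (1 : ℝ))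

set_option linter.unusedSectionVars false
section Helpers
variable {E : Type*} [NormedAddCommGroup E] [NormedSpace ℝ E]

lemma upd0 (a b x : E) : Function.update ![a, b] 0 x = ![x, b] := by
  funext i; fin_cases i <;> simp

lemma upd1 (a b y : E) : Function.update ![a, b] 1 y = ![a, y] := by
  funext i; fin_cases i <;> simp

/-- `f ![·, b]` as a linear map. -/
noncomputable def leftLin (f : ContinuousMultilinearMap ℝ (fun _ : Fin 2 => E) ℝ) (b : E) :
    E →ₗ[ℝ] ℝ where
  toFun a := f ![a, b]
  map_add' x y := by
    show f ![x + y, b] = f ![x, b] + f ![y, b]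
    rw [← upd0 x b (x + y), f.map_update_add, upd0, upd0]
  map_smul' c x := by
    show f ![c • x, b] = c • f ![x, b]
    rw [← upd0 x b (c • x), f.map_update_smul, upd0]

/-- `f ![a, ·]` as a linear map. -/
noncomputable def rightLin (f : ContinuousMultilinearMap ℝ (fun _ : Fin 2 => E) ℝ) (a : E) :
    E →ₗ[ℝ] ℝ where
  toFun b := f ![a, b]
  map_add' x y := by
    show f ![a, x + y] = f ![a, x] + f ![a, y]
    rw [← upd1 a x (x + y), f.map_update_add, upd1, upd1]
  map_smul' c x := by
    show f ![a, c • x] = c • f ![a, x]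
    rw [← upd1 a x (c • x), f.map_update_smul, upd1]

lemma sum_swap3 {A B C : Type*} [Fintype A] [Fintype B] [Fintype C]
    (F : A → B → C → ℝ) :
    ∑ u : A, ∑ v : B, ∑ x : C, F u v x = ∑ x : C, ∑ u : A, ∑ v : B, F u v x := by
  calc ∑ u : A, ∑ v : B, ∑ x : C, F u v x
      = ∑ u : A, ∑ x : C, ∑ v : B, F u v x :=
        Finset.sum_congr rfl fun u _ => Finset.sum_comm
    _ = ∑ x : C, ∑ u : A, ∑ v : B, F u v x := Finset.sum_comm

end Helpers
section Expand
variable {n p : ℕ}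

lemma fdExpand (f : ContinuousMultilinearMap ℝ (fun _ : Fin 2 => Matrix (Fin n) (Fin p) ℝ) ℝ)
    (A B : Matrix (Fin n) (Fin p) ℝ) :
    f ![A, B] = ∑ i : Fin n, ∑ j : Fin p, ∑ i' : Fin n, ∑ j' : Fin p,
      A i j * B i' j' * f ![Matrix.single i j (1 : ℝ),
        Matrix.single i' j' (1 : ℝ)] := by
  have hstd : ∀ (C : Matrix (Fin n) (Fin p) ℝ) (i : Fin n) (j : Fin p),
      Matrix.single i j (C i j) = C i j • Matrix.single i j (1 : ℝ) := by
    intro C i j; rw [Matrix.smul_single, smul_eq_mul, mul_one]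
  calc f ![A, B] = leftLin f B A := rfl
    _ = ∑ i : Fin n, ∑ j : Fin p, A i j * f ![Matrix.single i j (1 : ℝ), B] := by
        conv_lhs => rw [matrix_eq_sum_single A]
        rw [map_sum]
        refine Finset.sum_congr rfl fun i _ => ?_
        rw [map_sum]
        refine Finset.sum_congr rfl fun j _ => ?_
        rw [hstd A i j, _root_.map_smul, smul_eq_mul]
        rfl
    _ = _ := by
        refine Finset.sum_congr rfl fun i _ => Finset.sum_congr rfl fun j _ => ?_
        have : f ![Matrix.single i j (1 : ℝ), B]
            = ∑ i' : Fin n, ∑ j' : Fin p, B i' j' *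
              f ![Matrix.single i j (1 : ℝ), Matrix.single i' j' (1 : ℝ)] := by
          calc f ![Matrix.single i j (1 : ℝ), B]
              = rightLin f (Matrix.single i j (1 : ℝ)) B := rfl
            _ = _ := by
              conv_lhs => rw [matrix_eq_sum_single B]
              rw [map_sum]
              refine Finset.sum_congr rfl fun i' _ => ?_
              rw [map_sum]
              refine Finset.sum_congr rfl fun j' _ => ?_
              rw [hstd B i' j', _root_.map_smul, smul_eq_mul]
              rfl
        rw [this, Finset.mul_sum]
        refine Finset.sum_congr rfl fun i' _ => ?_
        rw [Finset.mul_sum]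
        refine Finset.sum_congr rfl fun j' _ => ?_
        ring
end Expand

section Entry
variable {n p : ℕ}

lemma projField_apply (X : Matrix (Fin n) (Fin p) ℝ) (u i : Fin n) (v j : Fin p) :
    projField X u v i j =
      (if u = i ∧ v = j then (1 : ℝ) else 0)
        - (Real.sqrt 2 / 2) * (X i v * X u j)
        - (1 - Real.sqrt 2 / 2) * ((X * Xᵀ) i u * (if v = j then (1 : ℝ) else 0)) := by
  have h1 : (X * (Matrix.single u v (1 : ℝ))ᵀ * X) i j = X i v * X u j := by
    simp [Matrix.mul_apply, Matrix.single, Matrix.transpose_apply,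
      Finset.sum_mul, mul_ite, ite_mul, ite_and, Finset.sum_ite_eq, Finset.sum_ite_eq']
  have h2 : (X * Xᵀ * Matrix.single u v (1 : ℝ)) i j
      = (X * Xᵀ) i u * (if v = j then (1 : ℝ) else 0) := by
    simp [Matrix.mul_apply (M := X * Xᵀ), Matrix.single, mul_ite, ite_and,
      Finset.sum_ite_eq, Finset.sum_ite_eq']
  simp only [projField, Matrix.sub_apply, Matrix.smul_apply, h1, h2, smul_eq_mul]
  rfl
end Entry

section Key
variable {n p : ℕ}

lemma Ksum (X : Matrix (Fin n) (Fin p) ℝ) (hX : Xᵀ * X = 1)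
    (i i' : Fin n) (j j' : Fin p) :
    ∑ u : Fin n, ∑ v : Fin p, projField X u v i j * projField X u v i' j' =
      (if i = i' then (1 : ℝ) else 0) * (if j = j' then (1 : ℝ) else 0)
        - X i j' * X i' j := by
  set a : ℝ := Real.sqrt 2 / 2 with ha'
  have ha : a ^ 2 = 1 / 2 := by
    rw [ha', div_pow, Real.sq_sqrt (by norm_num : (2:ℝ) ≥ 0)]; norm_num
  set M : Matrix (Fin n) (Fin n) ℝ := X * Xᵀ with hM'
  have hsym : ∀ x y, M x y = M y x := by
    intro x y; simp [hM', Matrix.mul_apply, mul_comm]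
  have horth : ∀ (c c' : Fin p), ∑ u : Fin n, X u c * X u c' = if c = c' then 1 else 0 := by
    intro c c'
    have := congrFun (congrFun hX c) c'
    simpa [Matrix.mul_apply, Matrix.one_apply] using this
  have hMX : ∀ (x : Fin n) (c : Fin p), ∑ u : Fin n, M x u * X u c = X x c := by
    intro x c
    have h : M * X = X := by rw [hM', Matrix.mul_assoc, hX, Matrix.mul_one]
    have := congrFun (congrFun h x) c
    simpa [Matrix.mul_apply] using this
  have hMM : ∀ x y, ∑ u : Fin n, M x u * M y u = M x y := by
    intro x y
    have h : M * M = M := by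
      rw [hM', Matrix.mul_assoc X Xᵀ (X * Xᵀ), ← Matrix.mul_assoc Xᵀ X Xᵀ, hX,
        Matrix.one_mul]
    have := congrFun (congrFun h x) y
    rw [Matrix.mul_apply] at this
    calc ∑ u, M x u * M y u = ∑ u, M x u * M u y :=
          Finset.sum_congr rfl fun u _ => by rw [hsym y u]
      _ = M x y := this
  calc ∑ u : Fin n, ∑ v : Fin p, projField X u v i j * projField X u v i' j'
      = ∑ u : Fin n, ∑ v : Fin p,
          ((if u = i ∧ v = j then (1:ℝ) else 0) * (if u = i' ∧ v = j' then 1 else 0)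
          - (if u = i ∧ v = j then (1:ℝ) else 0) * (a * (X i' v * X u j'))
          - (if u = i ∧ v = j then (1:ℝ) else 0) * ((1-a) * (M i' u * (if v = j' then 1 else 0)))
          - (a * (X i v * X u j)) * (if u = i' ∧ v = j' then 1 else 0)
          + (a * (X i v * X u j)) * (a * (X i' v * X u j'))
          + (a * (X i v * X u j)) * ((1-a) * (M i' u * (if v = j' then 1 else 0)))
          - ((1-a) * (M i u * (if v = j then 1 else 0))) * (if u = i' ∧ v = j' then 1 else 0)
          + ((1-a) * (M i u * (if v = j then 1 else 0))) * (a * (X i' v * X u j'))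
          + ((1-a) * (M i u * (if v = j then 1 else 0))) * ((1-a) * (M i' u * (if v = j' then 1 else 0)))) := by
        refine Finset.sum_congr rfl fun u _ => Finset.sum_congr rfl fun v _ => ?_
        rw [projField_apply, projField_apply, hM']
        ring
    _ = _ := by
        simp only [Finset.sum_add_distrib, Finset.sum_sub_distrib]
        have h1 : ∑ u : Fin n, ∑ v : Fin p,
            (if u = i ∧ v = j then (1:ℝ) else 0) * (if u = i' ∧ v = j' then 1 else 0)
            = (if i = i' then (1:ℝ) else 0) * (if j = j' then (1:ℝ) else 0) := by
          simp only [ite_and, mul_ite, ite_mul, one_mul, mul_one, zero_mul, mul_zero,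
            Finset.sum_ite_eq, Finset.sum_ite_eq', Finset.mem_univ, if_true]
          by_cases hi : i = i' <;> by_cases hj : j = j' <;>
            simp [hi, hj, eq_comm]
        have h2 : ∑ u : Fin n, ∑ v : Fin p,
            (if u = i ∧ v = j then (1:ℝ) else 0) * (a * (X i' v * X u j'))
            = a * (X i' j * X i j') := by
          simp [ite_and, ite_mul, Finset.sum_ite_eq, Finset.sum_ite_eq']
        have h3 : ∑ u : Fin n, ∑ v : Fin p,
            (if u = i ∧ v = j then (1:ℝ) else 0) * ((1-a) * (M i' u * (if v = j' then 1 else 0)))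
            = (1-a) * (M i i' * (if j = j' then 1 else 0)) := by
          simp only [ite_and, ite_mul, one_mul, zero_mul,
            Finset.sum_ite_eq, Finset.sum_ite_eq', Finset.mem_univ, if_true, hsym i i']
          by_cases hj : j = j' <;> simp [hj, eq_comm]
        have h4 : ∑ u : Fin n, ∑ v : Fin p,
            (a * (X i v * X u j)) * (if u = i' ∧ v = j' then 1 else 0)
            = a * (X i j' * X i' j) := by
          simp [ite_and, mul_ite, Finset.sum_ite_eq, Finset.sum_ite_eq']
        have h5 : ∑ u : Fin n, ∑ v : Fin p,
            (a * (X i v * X u j)) * (a * (X i' v * X u j'))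
            = a * a * (M i i' * (if j = j' then 1 else 0)) := by
          have hMe : M i i' = ∑ v : Fin p, X i v * X i' v := by
            simp [hM', Matrix.mul_apply]
          calc ∑ u : Fin n, ∑ v : Fin p, (a * (X i v * X u j)) * (a * (X i' v * X u j'))
              = ∑ u : Fin n, (a * a) * ((X u j * X u j') * ∑ v : Fin p, X i v * X i' v) := by
                refine Finset.sum_congr rfl fun u _ => ?_
                rw [Finset.mul_sum, Finset.mul_sum]
                refine Finset.sum_congr rfl fun v _ => by ring
            _ = (a * a) * ((∑ u : Fin n, X u j * X u j') * ∑ v : Fin p, X i v * X i' v) := by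
                rw [← Finset.mul_sum, ← Finset.sum_mul]
            _ = _ := by rw [horth, hMe]; ring
        have h6 : ∑ u : Fin n, ∑ v : Fin p,
            (a * (X i v * X u j)) * ((1-a) * (M i' u * (if v = j' then 1 else 0)))
            = a * (1-a) * (X i j' * X i' j) := by
          have : ∀ u : Fin n, ∑ v : Fin p,
              (a * (X i v * X u j)) * ((1-a) * (M i' u * (if v = j' then 1 else 0)))
              = (a * (1-a)) * (X i j' * (M i' u * X u j)) := by
            intro u
            simp [mul_ite, Finset.sum_ite_eq, Finset.sum_ite_eq']
            ring
          rw [Finset.sum_congr rfl fun u _ => this u, ← Finset.mul_sum]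
          have : ∑ u : Fin n, X i j' * (M i' u * X u j) = X i j' * X i' j := by
            rw [← Finset.mul_sum, ← hMX i' j, Finset.mul_sum]
          rw [this]
        have h7 : ∑ u : Fin n, ∑ v : Fin p,
            ((1-a) * (M i u * (if v = j then 1 else 0))) * (if u = i' ∧ v = j' then 1 else 0)
            = (1-a) * (M i i' * (if j = j' then 1 else 0)) := by
          simp [ite_and, mul_ite, Finset.sum_ite_eq, Finset.sum_ite_eq', eq_comm]
        have h8 : ∑ u : Fin n, ∑ v : Fin p,
            ((1-a) * (M i u * (if v = j then 1 else 0))) * (a * (X i' v * X u j'))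
            = (1-a) * a * (X i' j * X i j') := by
          have : ∀ u : Fin n, ∑ v : Fin p,
              ((1-a) * (M i u * (if v = j then 1 else 0))) * (a * (X i' v * X u j'))
              = ((1-a) * a) * (X i' j * (M i u * X u j')) := by
            intro u
            simp [mul_ite, ite_mul, Finset.sum_ite_eq, Finset.sum_ite_eq']
            ring
          rw [Finset.sum_congr rfl fun u _ => this u, ← Finset.mul_sum]
          have : ∑ u : Fin n, X i' j * (M i u * X u j') = X i' j * X i j' := by
            rw [← Finset.mul_sum, ← hMX i j', Finset.mul_sum]
          rw [this]
        have h9 : ∑ u : Fin n, ∑ v : Fin p,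
            ((1-a) * (M i u * (if v = j then 1 else 0))) * ((1-a) * (M i' u * (if v = j' then 1 else 0)))
            = (1-a) * (1-a) * (M i i' * (if j = j' then 1 else 0)) := by
          have : ∀ u : Fin n, ∑ v : Fin p,
              ((1-a) * (M i u * (if v = j then 1 else 0))) * ((1-a) * (M i' u * (if v = j' then 1 else 0)))
              = ((1-a) * (1-a)) * ((M i u * M i' u) * (if j = j' then 1 else 0)) := by
            intro u
            by_cases h : j = j'
            · subst h
              simp [mul_ite, ite_mul, Finset.sum_ite_eq, Finset.sum_ite_eq']
              ring
            · simp only [if_neg h, mul_zero]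
              refine Finset.sum_eq_zero fun v _ => ?_
              by_cases hv : v = j
              · subst hv; rw [if_neg h]; ring
              · rw [if_neg hv]; ring
          rw [Finset.sum_congr rfl fun u _ => this u, ← Finset.mul_sum, ← Finset.sum_mul, hMM]
        linear_combination h1 - h2 - h3 - h4 + h5 + h6 - h7 + h8 + h9
          + (2 * (M i i' * (if j = j' then 1 else 0)) - 2 * (X i j' * X i' j)) * ha
end Key

/-- the sum of second derivatives of `φ` along the projected fields equals
the second-order part of the extrinsic Laplace–Beltrami operator:
`∑_{u,v} D²φ(X)[P_{uv}(X), P_{uv}(X)] = ∑_{i,j} ∂²_{ij}φ(X) - ∑_{i,u,j,v} X_{iv} X_{uj} ∂_{ij}∂_{uv}φ(X)`. -/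
theorem proj_field_second_order (n p : ℕ) (hp : 1 ≤ p) (hpn : p ≤ n)
    (φ : Matrix (Fin n) (Fin p) ℝ → ℝ) (hφ : ContDiff ℝ 2 φ)
    (X : Matrix (Fin n) (Fin p) ℝ) (hX : Xᵀ * X = 1) :
    ∑ u : Fin n, ∑ v : Fin p,
        iteratedFDeriv ℝ 2 φ X ![projField X u v, projField X u v]
      = (∑ i : Fin n, ∑ j : Fin p,
          iteratedFDeriv ℝ 2 φ X
            ![Matrix.single i j (1 : ℝ), Matrix.single i j (1 : ℝ)])
        - ∑ i : Fin n, ∑ u : Fin n, ∑ j : Fin p, ∑ v : Fin p,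
            X i v * X u j * iteratedFDeriv ℝ 2 φ X
              ![Matrix.single i j (1 : ℝ), Matrix.single u v (1 : ℝ)] := by
  set f := iteratedFDeriv ℝ 2 φ X with hf
  calc ∑ u : Fin n, ∑ v : Fin p, f ![projField X u v, projField X u v]
      = ∑ u : Fin n, ∑ v : Fin p, ∑ i : Fin n, ∑ j : Fin p, ∑ i' : Fin n, ∑ j' : Fin p,
          projField X u v i j * projField X u v i' j' *
            f ![Matrix.single i j (1 : ℝ), Matrix.single i' j' (1 : ℝ)] :=
        Finset.sum_congr rfl fun u _ => Finset.sum_congr rfl fun v _ => fdExpand f _ _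
    _ = ∑ i : Fin n, ∑ u : Fin n, ∑ v : Fin p, ∑ j : Fin p, ∑ i' : Fin n, ∑ j' : Fin p,
          projField X u v i j * projField X u v i' j' *
            f ![Matrix.single i j (1 : ℝ), Matrix.single i' j' (1 : ℝ)] :=
        sum_swap3 _
    _ = ∑ i : Fin n, ∑ j : Fin p, ∑ u : Fin n, ∑ v : Fin p, ∑ i' : Fin n, ∑ j' : Fin p,
          projField X u v i j * projField X u v i' j' *
            f ![Matrix.single i j (1 : ℝ), Matrix.single i' j' (1 : ℝ)] :=
        Finset.sum_congr rfl fun i _ => sum_swap3 _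
    _ = ∑ i : Fin n, ∑ j : Fin p, ∑ i' : Fin n, ∑ u : Fin n, ∑ v : Fin p, ∑ j' : Fin p,
          projField X u v i j * projField X u v i' j' *
            f ![Matrix.single i j (1 : ℝ), Matrix.single i' j' (1 : ℝ)] :=
        Finset.sum_congr rfl fun i _ => Finset.sum_congr rfl fun j _ => sum_swap3 _
    _ = ∑ i : Fin n, ∑ j : Fin p, ∑ i' : Fin n, ∑ j' : Fin p, ∑ u : Fin n, ∑ v : Fin p,
          projField X u v i j * projField X u v i' j' *
            f ![Matrix.single i j (1 : ℝ), Matrix.single i' j' (1 : ℝ)] :=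
        Finset.sum_congr rfl fun i _ => Finset.sum_congr rfl fun j _ =>
          Finset.sum_congr rfl fun i' _ => sum_swap3 _
    _ = ∑ i : Fin n, ∑ j : Fin p, ∑ i' : Fin n, ∑ j' : Fin p,
          (∑ u : Fin n, ∑ v : Fin p, projField X u v i j * projField X u v i' j') *
            f ![Matrix.single i j (1 : ℝ), Matrix.single i' j' (1 : ℝ)] := by
        refine Finset.sum_congr rfl fun i _ => Finset.sum_congr rfl fun j _ =>
          Finset.sum_congr rfl fun i' _ => Finset.sum_congr rfl fun j' _ => ?_
        rw [Finset.sum_mul]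
        exact Finset.sum_congr rfl fun u _ => (Finset.sum_mul _ _ _).symm
    _ = ∑ i : Fin n, ∑ j : Fin p, ∑ i' : Fin n, ∑ j' : Fin p,
          ((if i = i' then (1 : ℝ) else 0) * (if j = j' then (1 : ℝ) else 0)
            - X i j' * X i' j) *
            f ![Matrix.single i j (1 : ℝ), Matrix.single i' j' (1 : ℝ)] := by
        refine Finset.sum_congr rfl fun i _ => Finset.sum_congr rfl fun j _ =>
          Finset.sum_congr rfl fun i' _ => Finset.sum_congr rfl fun j' _ => ?_
        rw [Ksum X hX]
    _ = ∑ i : Fin n, ∑ j : Fin p,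
          (f ![Matrix.single i j (1 : ℝ), Matrix.single i j (1 : ℝ)]
            - ∑ i' : Fin n, ∑ j' : Fin p, X i j' * X i' j *
              f ![Matrix.single i j (1 : ℝ), Matrix.single i' j' (1 : ℝ)]) := by
        refine Finset.sum_congr rfl fun i _ => Finset.sum_congr rfl fun j _ => ?_
        have : ∀ i' : Fin n, ∑ j' : Fin p,
            ((if i = i' then (1 : ℝ) else 0) * (if j = j' then (1 : ℝ) else 0)
              - X i j' * X i' j) *
              f ![Matrix.single i j (1 : ℝ), Matrix.single i' j' (1 : ℝ)]
            = (∑ j' : Fin p, (if i = i' then (1 : ℝ) else 0) * (if j = j' then (1 : ℝ) else 0) *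
                f ![Matrix.single i j (1 : ℝ), Matrix.single i' j' (1 : ℝ)])
              - ∑ j' : Fin p, X i j' * X i' j *
                f ![Matrix.single i j (1 : ℝ), Matrix.single i' j' (1 : ℝ)] := by
          intro i'
          rw [← Finset.sum_sub_distrib]
          exact Finset.sum_congr rfl fun j' _ => by ring
        rw [Finset.sum_congr rfl fun i' _ => this i', Finset.sum_sub_distrib]
        congr 1
        simp [ite_mul, Finset.sum_ite_eq]
    _ = (∑ i : Fin n, ∑ j : Fin p,
          f ![Matrix.single i j (1 : ℝ), Matrix.single i j (1 : ℝ)])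
        - ∑ i : Fin n, ∑ j : Fin p, ∑ i' : Fin n, ∑ j' : Fin p, X i j' * X i' j *
            f ![Matrix.single i j (1 : ℝ), Matrix.single i' j' (1 : ℝ)] := by
        rw [← Finset.sum_sub_distrib]
        exact Finset.sum_congr rfl fun i _ => Finset.sum_sub_distrib ..
    _ = _ := by
        congr 1
        exact Finset.sum_congr rfl fun i _ => Finset.sum_comm
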